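/- If X, Y, Z are independent Exp(1) random variables and δ ∈ ℝ, then the random variable D = min{δ + Y, X + Z} − min{X, δ + Y + Z} has probability density d ↦ K(δ,d) where K(δ,d) = e^{−|d|} if (d < 0 and δ ≤ d) or (d > 0 and δ > d), K(δ,d) = e^{−|d|} e^{−(δ−d)} if d < 0 and δ > d, and K(δ,d) = e^{−|d|} e^{−(d−δ)} if d > 0 and δ ≤ d. -/

import Mathlib

open Real MeasureTheory ProbabilityTheory

/-- The density of `min{δ+Y, X+Z} − min{X, δ+Y+Z}` (value at `d = 0` is irrelevant a.e.). -/
noncomputable def Kden (δ d : ℝ) : ℝ :=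
  if d < 0 then (if δ ≤ d then exp (-|d|) else exp (-|d|) * exp (-(δ - d)))
  else if 0 < d then (if δ ≤ d then exp (-|d|) * exp (-(d - δ)) else exp (-|d|))
  else exp (-|δ|)

open Set

namespace DiffMinAux

/-- tail of `Y - X` for independent Exp(1)'s -/
noncomputable def Tre (s : ℝ) : ℝ := if 0 ≤ s then exp (-s) / 2 else 1 - exp s / 2

/-- tail of the target distribution -/
noncomputable def Sre (δ t : ℝ) : ℝ :=
  if 0 < t then Tre (t - δ) * exp (-t) else 1 - (1 - Tre (t - δ)) * exp t

lemma Tre_nonneg (s : ℝ) : 0 ≤ Tre s := by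
  unfold Tre; split_ifs with h
  · positivity
  · nlinarith [exp_le_one_iff.2 (show s ≤ 0 by linarith), exp_pos s]

lemma Tre_le_one (s : ℝ) : Tre s ≤ 1 := by
  unfold Tre; split_ifs with h
  · nlinarith [exp_le_one_iff.2 (by linarith : -s ≤ 0)]
  · nlinarith [exp_pos s]

lemma int_exp_Ioi (a c : ℝ) {b : ℝ} (hb : 0 < b) :
    ∫ x in Ioi a, exp (c - b * x) = exp (c - b * a) / b := by
  have h1 : ∀ x : ℝ, exp (c - b * x) = exp c * exp (-(b * x)) := by
    intro x; rw [← exp_add, sub_eq_add_neg]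
  calc ∫ x in Ioi a, exp (c - b * x) = ∫ x in Ioi a, exp c * exp (-(b * x)) := by
        simp_rw [h1]
    _ = exp c * ∫ x in Ioi a, (fun u => exp (-u)) (b * x) := by
        rw [integral_const_mul]
    _ = exp c * (b⁻¹ • ∫ x in Ioi (b * a), exp (-x)) := by
        rw [integral_comp_mul_left_Ioi (fun u => exp (-u)) a hb]
    _ = exp (c - b * a) / b := by
        rw [integral_exp_neg_Ioi, smul_eq_mul, h1 a]
        field_simp

lemma intOn_exp_Ioi (a c : ℝ) {b : ℝ} (hb : 0 < b) :
    IntegrableOn (fun x => exp (c - b * x)) (Ioi a) := by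
  have h := (exp_neg_integrableOn_Ioi a hb).const_mul (exp c)
  refine IntegrableOn.congr_fun h (fun x _ => ?_) measurableSet_Ioi
  rw [← exp_add]; congr 1; ring

lemma int_exp_Ioc (a b c e : ℝ) (hab : a ≤ b) (he : e ≠ 0) :
    ∫ x in Ioc a b, exp (c + e * x) = (exp (c + e * b) - exp (c + e * a)) / e := by
  rw [← intervalIntegral.integral_of_le hab]
  have h1 : ∀ x : ℝ, exp (c + e * x) = exp (e * x + c) := by intro x; congr 1; ring
  simp_rw [h1]
  rw [intervalIntegral.integral_comp_mul_add exp he c, integral_exp, smul_eq_mul]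
  rw [show e * b + c = c + e * b by ring, show e * a + c = c + e * a by ring]
  field_simp

lemma intOn_exp_Ioc (a b c e : ℝ) :
    IntegrableOn (fun x => exp (c + e * x)) (Ioc a b) := by
  apply (Continuous.integrableOn_Ioc ?_)
  exact continuous_exp.comp (continuous_const.add (continuous_const.mul continuous_id))


lemma Kden_nonneg (δ d : ℝ) : 0 ≤ Kden δ d := by
  unfold Kden; split_ifs <;> positivity

lemma Kden_le (δ d : ℝ) : Kden δ d ≤ exp (-|d|) := by
  unfold Kden; split_ifs with h1 h2 h3 h4
  · exact le_rfl
  · exact mul_le_of_le_one_right (exp_pos _).le (exp_le_one_iff.2 (by linarith [not_le.1 h2]))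
  · exact mul_le_of_le_one_right (exp_pos _).le (exp_le_one_iff.2 (by linarith))
  · exact le_rfl
  · have hd : d = 0 := le_antisymm (not_lt.1 h3) (not_lt.1 h1)
    simp only [hd, abs_zero, neg_zero, exp_zero]
    exact exp_le_one_iff.2 (neg_nonpos.2 (abs_nonneg δ))

lemma Kden_measurable (δ : ℝ) : Measurable (Kden δ) := by
  unfold Kden
  have h1 : Measurable fun d : ℝ => exp (-|d|) :=
    (continuous_exp.comp (continuous_abs.neg)).measurable
  refine Measurable.ite measurableSet_Iio (Measurable.ite (measurableSet_Ici) h1 ?_)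
    (Measurable.ite measurableSet_Ioi (Measurable.ite (measurableSet_Ici) ?_ h1) measurable_const)
  · exact (h1.mul ((continuous_exp.comp ((continuous_const.sub continuous_id).neg)).measurable))
  · exact (h1.mul ((continuous_exp.comp ((continuous_id.sub continuous_const).neg)).measurable))

lemma Kden_neg_left {δ d : ℝ} (hd : d < 0) (hδ : δ ≤ d) : Kden δ d = exp d := by
  unfold Kden; rw [if_pos hd, if_pos hδ, abs_of_neg hd, neg_neg]

lemma Kden_neg_right {δ d : ℝ} (hd : d < 0) (hδ : d < δ) : Kden δ d = exp (-δ + 2 * d) := by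
  unfold Kden; rw [if_pos hd, if_neg (not_le.2 hδ), abs_of_neg hd, neg_neg, ← exp_add]
  congr 1; ring

lemma Kden_pos_left {δ d : ℝ} (hd : 0 < d) (hδ : d < δ) : Kden δ d = exp (0 + -1 * d) := by
  unfold Kden
  rw [if_neg (not_lt.2 hd.le), if_pos hd, if_neg (not_le.2 hδ), abs_of_pos hd]
  congr 1; ring

lemma Kden_pos_right {δ d : ℝ} (hd : 0 < d) (hδ : δ ≤ d) : Kden δ d = exp (δ - 2 * d) := by
  unfold Kden
  rw [if_neg (not_lt.2 hd.le), if_pos hd, if_pos hδ, abs_of_pos hd, ← exp_add]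
  congr 1; ring

lemma Kden_integrable (δ : ℝ) : Integrable (Kden δ) := by
  have hbase : Integrable (fun d : ℝ => exp (-|d|)) := by
    have h1 : IntegrableOn (fun d : ℝ => exp (-|d|)) (Iic 0) := by
      refine IntegrableOn.congr_fun (integrableOn_exp_Iic 0) (fun x hx => ?_) measurableSet_Iic
      rw [abs_of_nonpos hx, neg_neg]
    have h2 : IntegrableOn (fun d : ℝ => exp (-|d|)) (Ioi 0) := by
      refine IntegrableOn.congr_fun (intOn_exp_Ioi 0 0 one_pos) (fun x hx => ?_) measurableSet_Ioi
      rw [abs_of_pos hx]; congr 1; ring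
    have := h1.union h2
    rwa [Iic_union_Ioi, integrableOn_univ] at this
  refine hbase.mono ((Kden_measurable δ).aestronglyMeasurable) (ae_of_all _ fun d => ?_)
  rw [Real.norm_eq_abs, Real.norm_eq_abs, abs_of_nonneg (Kden_nonneg δ d),
    abs_of_nonneg (exp_pos _).le]
  exact Kden_le δ d

section ExpM

lemma expMeasure_def : expMeasure 1 = volume.withDensity (exponentialPDF 1) := rfl

lemma exp_Iic (u : ℝ) :
    expMeasure 1 (Iic u) = ENNReal.ofReal (if 0 ≤ u then 1 - exp (-u) else 0) := by
  rw [expMeasure_def, withDensity_apply _ measurableSet_Iic]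
  simpa using lintegral_exponentialPDF_eq_antiDeriv one_pos u

lemma exp_singleton (u : ℝ) : expMeasure 1 {u} = 0 := by
  rw [expMeasure_def, withDensity_apply _ (measurableSet_singleton u)]
  rw [Measure.restrict_singleton]
  simp [Real.volume_singleton]

lemma exp_Iio (u : ℝ) :
    expMeasure 1 (Iio u) = ENNReal.ofReal (if 0 ≤ u then 1 - exp (-u) else 0) := by
  have h : Iic u = Iio u ∪ {u} := by ext x; simp [le_iff_lt_or_eq]
  have h2 : expMeasure 1 (Iio u) = expMeasure 1 (Iic u) := by
    refine le_antisymm (measure_mono Iio_subset_Iic_self) ?_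
    calc expMeasure 1 (Iic u) ≤ expMeasure 1 (Iio u) + expMeasure 1 {u} :=
          h ▸ measure_union_le _ _
      _ = expMeasure 1 (Iio u) := by rw [exp_singleton, add_zero]
  rw [h2, exp_Iic]


lemma exp_prob : IsProbabilityMeasure (expMeasure 1) :=
  isProbabilityMeasure_expMeasure one_pos

lemma exp_Ici (u : ℝ) :
    expMeasure 1 (Ici u) = ENNReal.ofReal (if 0 ≤ u then exp (-u) else 1) := by
  have := exp_prob
  have h : Ici u = (Iio u)ᶜ := by simp
  rw [h, prob_compl_eq_one_sub measurableSet_Iio, exp_Iio]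
  split_ifs with hu
  · rw [← ENNReal.ofReal_one, ← ENNReal.ofReal_sub _ (by nlinarith [exp_le_one_iff.2 (neg_nonpos.2 hu)] : (0:ℝ) ≤ 1 - exp (-u))]
    norm_num
  · simp

lemma exp_Ioi (u : ℝ) :
    expMeasure 1 (Ioi u) = ENNReal.ofReal (if 0 ≤ u then exp (-u) else 1) := by
  have := exp_prob
  have h : Ioi u = (Iic u)ᶜ := by simp
  rw [h, prob_compl_eq_one_sub measurableSet_Iic, exp_Iic]
  split_ifs with hu
  · rw [← ENNReal.ofReal_one, ← ENNReal.ofReal_sub _ (by nlinarith [exp_le_one_iff.2 (neg_nonpos.2 hu)] : (0:ℝ) ≤ 1 - exp (-u))]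
    norm_num
  · simp

end ExpM

section MinAlg

lemma rep (δ x y z : ℝ) :
    min (δ + y) (x + z) - min x (δ + y + z)
      = min (δ + y - x) z - min 0 (δ + y - x + z) := by
  have h1 : min (δ + y) (x + z) = x + min (δ + y - x) z := by
    have h := min_add_add_left x (δ + y - x) z
    rw [show x + (δ + y - x) = δ + y by ring] at h
    exact h
  have h2 : min x (δ + y + z) = x + min 0 (δ + y - x + z) := by
    have h := min_add_add_left x 0 (δ + y - x + z)
    rw [add_zero, show x + (δ + y - x + z) = δ + y + z by ring] at h
    exact h
  rw [h1, h2]; ring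

lemma aux_pos {w z t : ℝ} (hz : 0 ≤ z) (ht : 0 < t) :
    t ≤ min w z - min 0 (w + z) ↔ t ≤ w ∧ t ≤ z := by
  rcases le_total w z with h1 | h1
  · rw [min_eq_left h1]
    rcases le_total (0:ℝ) (w + z) with h2 | h2
    · rw [min_eq_left h2]
      exact ⟨fun h => ⟨by linarith, by linarith⟩, fun h => by linarith [h.1, h.2]⟩
    · rw [min_eq_right h2]
      exact ⟨fun h => ⟨by linarith, by linarith⟩, fun h => by linarith [h.1, h.2]⟩
  · rw [min_eq_right h1]
    rcases le_total (0:ℝ) (w + z) with h2 | h2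
    · rw [min_eq_left h2]
      exact ⟨fun h => ⟨by linarith, by linarith⟩, fun h => by linarith [h.1, h.2]⟩
    · rw [min_eq_right h2]
      exact ⟨fun h => ⟨by linarith, by linarith⟩, fun h => by linarith [h.1, h.2]⟩

lemma aux_neg {w z t : ℝ} (hz : 0 ≤ z) (ht : t ≤ 0) :
    min w z - min 0 (w + z) < t ↔ w < t ∧ -t < z := by
  rcases le_total w z with h1 | h1
  · rw [min_eq_left h1]
    rcases le_total (0:ℝ) (w + z) with h2 | h2
    · rw [min_eq_left h2]
      exact ⟨fun h => ⟨by linarith, by linarith⟩, fun h => by linarith [h.1, h.2]⟩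
    · rw [min_eq_right h2]
      exact ⟨fun h => ⟨by linarith, by linarith⟩, fun h => by linarith [h.1, h.2]⟩
  · rw [min_eq_right h1]
    rcases le_total (0:ℝ) (w + z) with h2 | h2
    · rw [min_eq_left h2]
      exact ⟨fun h => ⟨by linarith, by linarith⟩, fun h => by linarith [h.1, h.2]⟩
    · rw [min_eq_right h2]
      exact ⟨fun h => ⟨by linarith, by linarith⟩, fun h => by linarith [h.1, h.2]⟩

end MinAlg

section KdenInt

lemma ae_ne (c : ℝ) : ∀ᵐ d : ℝ ∂(volume : Measure ℝ), d ≠ c :=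
  measure_eq_zero_iff_ae_notMem.1 (measure_singleton c)

lemma setIntegral_Kden_congr {δ : ℝ} {s : Set ℝ} (hs : MeasurableSet s) {g : ℝ → ℝ}
    (h : ∀ d ∈ s, d ≠ 0 → d ≠ δ → Kden δ d = g d) :
    ∫ d in s, Kden δ d = ∫ d in s, g d := by
  refine setIntegral_congr_ae hs ?_
  filter_upwards [ae_ne 0, ae_ne δ] with d h0 hδ hds
  exact h d hds h0 hδ

lemma intKpos (δ : ℝ) : ∫ d in Ioi (0:ℝ), Kden δ d = Tre (-δ) := by
  rcases le_or_gt δ 0 with hδ | hδ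
  · have hc : ∀ d ∈ Ioi (0:ℝ), d ≠ 0 → d ≠ δ → Kden δ d = exp (δ - 2 * d) :=
      fun d hd _ _ => Kden_pos_right (mem_Ioi.1 hd) (by linarith [mem_Ioi.1 hd])
    rw [setIntegral_Kden_congr measurableSet_Ioi hc, int_exp_Ioi 0 δ two_pos]
    simp [Tre, neg_nonneg.2 hδ]
  · rw [← Ioc_union_Ioi_eq_Ioi hδ.le,
      setIntegral_union (Ioc_disjoint_Ioi le_rfl) measurableSet_Ioi
        ((Kden_integrable δ).integrableOn) ((Kden_integrable δ).integrableOn)]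
    have hc1 : ∀ d ∈ Ioc (0:ℝ) δ, d ≠ 0 → d ≠ δ → Kden δ d = exp (0 + -1 * d) :=
      fun d hd _ hdδ => Kden_pos_left hd.1 (lt_of_le_of_ne hd.2 hdδ)
    have hc2 : ∀ d ∈ Ioi δ, d ≠ 0 → d ≠ δ → Kden δ d = exp (δ - 2 * d) :=
      fun d hd _ _ => Kden_pos_right (hδ.trans (mem_Ioi.1 hd)) (mem_Ioi.1 hd).le
    rw [setIntegral_Kden_congr measurableSet_Ioc hc1,
      setIntegral_Kden_congr measurableSet_Ioi hc2,
      int_exp_Ioc 0 δ 0 (-1) hδ.le (by norm_num), int_exp_Ioi δ δ two_pos]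
    simp only [Tre, if_neg (show ¬ (0:ℝ) ≤ -δ by linarith)]
    rw [show δ - 2 * δ = -δ by ring, show (0:ℝ) + -1 * δ = -δ by ring,
      show (0:ℝ) + -1 * 0 = -0 by ring, neg_zero, exp_zero]
    ring

lemma intKneg {δ t : ℝ} (ht : t ≤ 0) :
    ∫ d in Ioc t 0, Kden δ d =
      if δ ≤ t then 1 - exp t
      else if δ ≤ 0 then (exp δ - exp (-δ + 2 * t)) / 2 + (1 - exp δ)
      else (exp (-δ) - exp (-δ + 2 * t)) / 2 := by
  rcases le_or_gt δ t with hδ | hδ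
  · rw [if_pos hδ]
    have hc : ∀ d ∈ Ioc t (0:ℝ), d ≠ 0 → d ≠ δ → Kden δ d = exp (0 + 1 * d) := by
      intro d hd h0 _
      rw [Kden_neg_left (lt_of_le_of_ne hd.2 h0) (hδ.trans hd.1.le)]
      congr 1; ring
    rw [setIntegral_Kden_congr measurableSet_Ioc hc,
      int_exp_Ioc t 0 0 1 ht one_ne_zero]
    norm_num
  · rw [if_neg (not_le.2 hδ)]
    rcases le_or_gt δ 0 with hδ0 | hδ0
    · rw [if_pos hδ0, ← Ioc_union_Ioc_eq_Ioc hδ.le hδ0,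
        setIntegral_union (Set.Ioc_disjoint_Ioc_of_le le_rfl) measurableSet_Ioc
          ((Kden_integrable δ).integrableOn) ((Kden_integrable δ).integrableOn)]
      have hc1 : ∀ d ∈ Ioc t δ, d ≠ 0 → d ≠ δ → Kden δ d = exp (-δ + 2 * d) :=
        fun d hd h0 hdδ =>
          Kden_neg_right (lt_of_le_of_ne (hd.2.trans hδ0) (by exact fun h => h0 h))
            (lt_of_le_of_ne hd.2 hdδ)
      have hc2 : ∀ d ∈ Ioc δ (0:ℝ), d ≠ 0 → d ≠ δ → Kden δ d = exp (0 + 1 * d) := by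
        intro d hd h0 _
        rw [Kden_neg_left (lt_of_le_of_ne hd.2 h0) hd.1.le]
        congr 1; ring
      rw [setIntegral_Kden_congr measurableSet_Ioc hc1,
        setIntegral_Kden_congr measurableSet_Ioc hc2,
        int_exp_Ioc t δ (-δ) 2 hδ.le two_ne_zero,
        int_exp_Ioc δ 0 0 1 hδ0 one_ne_zero]
      norm_num
      ring_nf
    · rw [if_neg (not_le.2 hδ0)]
      have hc : ∀ d ∈ Ioc t (0:ℝ), d ≠ 0 → d ≠ δ → Kden δ d = exp (-δ + 2 * d) :=
        fun d hd h0 _ =>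
          Kden_neg_right (lt_of_le_of_ne hd.2 h0) (by linarith [hd.2])
      rw [setIntegral_Kden_congr measurableSet_Ioc hc,
        int_exp_Ioc t 0 (-δ) 2 ht two_ne_zero]
      ring_nf

lemma integral_Kden_Ici (δ t : ℝ) : ∫ d in Ici t, Kden δ d = Sre δ t := by
  rw [integral_Ici_eq_integral_Ioi]
  rcases lt_or_ge 0 t with ht | ht
  · rw [Sre, if_pos ht]
    rcases le_or_gt δ t with hδt | hδt
    · have hc : ∀ d ∈ Ioi t, d ≠ 0 → d ≠ δ → Kden δ d = exp (δ - 2 * d) :=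
        fun d hd _ _ => Kden_pos_right (ht.trans (mem_Ioi.1 hd)) (hδt.trans (mem_Ioi.1 hd).le)
      rw [setIntegral_Kden_congr measurableSet_Ioi hc, int_exp_Ioi t δ two_pos]
      rw [Tre, if_pos (by linarith : (0:ℝ) ≤ t - δ)]
      rw [div_mul_eq_mul_div, ← exp_add, show -(t - δ) + -t = δ - 2 * t by ring]
    · rw [← Ioc_union_Ioi_eq_Ioi hδt.le,
        setIntegral_union (Ioc_disjoint_Ioi le_rfl) measurableSet_Ioi
          ((Kden_integrable δ).integrableOn) ((Kden_integrable δ).integrableOn)]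
      have hc1 : ∀ d ∈ Ioc t δ, d ≠ 0 → d ≠ δ → Kden δ d = exp (0 + -1 * d) :=
        fun d hd _ hdδ => Kden_pos_left (ht.trans hd.1) (lt_of_le_of_ne hd.2 hdδ)
      have hc2 : ∀ d ∈ Ioi δ, d ≠ 0 → d ≠ δ → Kden δ d = exp (δ - 2 * d) :=
        fun d hd _ _ => Kden_pos_right (by linarith [mem_Ioi.1 hd]) (mem_Ioi.1 hd).le
      rw [setIntegral_Kden_congr measurableSet_Ioc hc1,
        setIntegral_Kden_congr measurableSet_Ioi hc2,
        int_exp_Ioc t δ 0 (-1) hδt.le (by norm_num), int_exp_Ioi δ δ two_pos]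
      simp only [Tre, if_neg (show ¬ (0:ℝ) ≤ t - δ by linarith)]
      rw [show δ - 2 * δ = -δ by ring, show (0:ℝ) + -1 * δ = -δ by ring,
        show (0:ℝ) + -1 * t = -t by ring]
      have e1 : exp (t - δ) * exp (-t) = exp (-δ) := by rw [← exp_add]; congr 1; ring
      linear_combination (1/2 : ℝ) * e1
  · rw [Sre, if_neg (not_lt.2 ht), ← Ioc_union_Ioi_eq_Ioi ht,
      setIntegral_union (Ioc_disjoint_Ioi le_rfl) measurableSet_Ioi
        ((Kden_integrable δ).integrableOn) ((Kden_integrable δ).integrableOn),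
      intKpos δ, intKneg ht]
    rcases le_or_gt δ t with hδ | hδ
    · rw [if_pos hδ]
      simp only [Tre, if_pos (show (0:ℝ) ≤ -δ by linarith),
        if_pos (show (0:ℝ) ≤ t - δ by linarith), neg_neg]
      have e1 : exp (-(t - δ)) * exp t = exp δ := by rw [← exp_add]; congr 1; ring
      linear_combination (-1/2 : ℝ) * e1
    · rw [if_neg (not_le.2 hδ)]
      simp only [Tre, if_neg (show ¬ (0:ℝ) ≤ t - δ by linarith)]
      rcases le_or_gt δ 0 with hδ0 | hδ0
      · rw [if_pos hδ0]
        simp only [Tre, if_pos (show (0:ℝ) ≤ -δ by linarith), neg_neg]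
        have e1 : exp (t - δ) * exp t = exp (-δ + 2 * t) := by rw [← exp_add]; congr 1; ring
        linear_combination (1/2 : ℝ) * e1
      · rw [if_neg (not_le.2 hδ0)]
        simp only [Tre, if_neg (show ¬ (0:ℝ) ≤ -δ by linarith)]
        have e1 : exp (t - δ) * exp t = exp (-δ + 2 * t) := by rw [← exp_add]; congr 1; ring
        linear_combination (1/2 : ℝ) * e1

end KdenInt

section Tail

lemma tail_sub {Ω : Type*} [MeasurableSpace Ω] (μ : Measure Ω) [IsProbabilityMeasure μ]
    {X Y : Ω → ℝ} (hX : Measurable X) (hY : Measurable Y) (hXY : IndepFun X Y μ)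
    (hXe : Measure.map X μ = expMeasure 1) (hYe : Measure.map Y μ = expMeasure 1) (s : ℝ) :
    μ {ω | s ≤ Y ω - X ω} = ENNReal.ofReal (Tre s) := by
  have hmap : μ.map (fun ω => (X ω, Y ω)) = (expMeasure 1).prod (expMeasure 1) := by
    exact ((indepFun_iff_map_prod_eq_prod_map_map hX.aemeasurable hY.aemeasurable).mp hXY).trans
      (by rw [hXe, hYe])
  have hS : MeasurableSet {p : ℝ × ℝ | s ≤ p.2 - p.1} :=
    measurableSet_le measurable_const (measurable_snd.sub measurable_fst)
  have hexpprob : IsProbabilityMeasure (expMeasure 1) := exp_prob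
  have h1 : μ {ω | s ≤ Y ω - X ω}
      = ((expMeasure 1).prod (expMeasure 1)) {p : ℝ × ℝ | s ≤ p.2 - p.1} := by
    rw [← hmap, Measure.map_apply (hX.prodMk hY) hS]; rfl
  rw [h1, Measure.prod_apply hS]
  have h2 : ∀ x : ℝ, (Prod.mk x ⁻¹' {p : ℝ × ℝ | s ≤ p.2 - p.1}) = Ici (x + s) := by
    intro x; ext y
    simp only [mem_preimage, mem_setOf_eq, mem_Ici]
    constructor <;> intro h <;> linarith
  simp_rw [h2, exp_Ici]
  have hfm : Measurable (exponentialPDF 1) := (measurable_exponentialPDFReal 1).ennreal_ofReal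
  have hgmeas : Measurable fun x : ℝ => ENNReal.ofReal (if 0 ≤ x + s then exp (-(x + s)) else 1) := by
    apply Measurable.ennreal_ofReal
    exact Measurable.ite (measurableSet_le measurable_const (by fun_prop)) (by fun_prop)
      (by fun_prop)
  rw [expMeasure_def, lintegral_withDensity_eq_lintegral_mul _ hfm hgmeas]
  set Ef : ℝ → ℝ :=
    fun x => (if 0 ≤ x then exp (-x) else 0) * (if 0 ≤ x + s then exp (-(x + s)) else 1)
    with hEf
  have h3 : ∀ x : ℝ,
      (exponentialPDF 1 * fun x => ENNReal.ofReal (if 0 ≤ x + s then exp (-(x + s)) else 1)) x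
        = ENNReal.ofReal (Ef x) := by
    intro x
    rw [Pi.mul_apply, exponentialPDF_eq,
      ← ENNReal.ofReal_mul (by split_ifs <;> positivity)]
    congr 1
    simp only [hEf, one_mul]
  simp_rw [h3]
  set g : ℝ → ℝ := fun x => exp (-x) * (if 0 ≤ x + s then exp (-(x + s)) else 1) with hg
  have hgm : AEStronglyMeasurable g (volume.restrict (Ici (0:ℝ))) := by
    refine Measurable.aestronglyMeasurable ?_
    exact (continuous_exp.comp continuous_neg).measurable.mul
      (Measurable.ite (measurableSet_le measurable_const (measurable_id.add_const s))
        ((continuous_exp.comp ((continuous_id.add continuous_const).neg)).measurable)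
        measurable_const)
  have hbase : IntegrableOn (fun x : ℝ => exp (-x)) (Ici (0:ℝ)) := by
    rw [integrableOn_Ici_iff_integrableOn_Ioi]
    refine IntegrableOn.congr_fun (intOn_exp_Ioi 0 0 one_pos) (fun x _ => ?_) measurableSet_Ioi
    congr 1; ring
  have hgint : IntegrableOn g (Ici (0:ℝ)) := by
    refine Integrable.mono hbase hgm (ae_of_all _ fun x => ?_)
    rw [Real.norm_eq_abs, Real.norm_eq_abs, abs_of_nonneg (exp_pos _).le,
      abs_of_nonneg (by simp only [hg]; split_ifs <;> positivity : 0 ≤ g x)]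
    simp only [hg]
    apply mul_le_of_le_one_right (exp_pos _).le
    split_ifs with h
    · exact exp_le_one_iff.2 (by linarith)
    · exact le_rfl
  have hEeq : Ef = Set.indicator (Ici (0:ℝ)) g := by
    funext x
    by_cases hx : (0:ℝ) ≤ x <;> simp [hEf, hg, Set.indicator, hx, mem_Ici]
  have hEint : Integrable Ef := by
    rw [hEeq, integrable_indicator_iff measurableSet_Ici]; exact hgint
  have hEnn : 0 ≤ᵐ[volume] Ef := ae_of_all _ fun x => by
    simp only [hEf]; split_ifs <;> positivity
  rw [← ofReal_integral_eq_lintegral_ofReal hEint hEnn]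
  congr 1
  rw [hEeq, integral_indicator measurableSet_Ici, integral_Ici_eq_integral_Ioi]
  rcases le_or_gt 0 s with hs | hs
  · have hc : EqOn g (fun x => exp (-s - 2 * x)) (Ioi 0) := by
      intro x hx
      simp only [hg, if_pos (by linarith [mem_Ioi.1 hx] : (0:ℝ) ≤ x + s)]
      rw [← exp_add]; congr 1; ring
    rw [setIntegral_congr_fun measurableSet_Ioi hc, int_exp_Ioi 0 (-s) two_pos]
    simp [Tre, hs]
  · rw [← Ioc_union_Ioi_eq_Ioi (by linarith : (0:ℝ) ≤ -s),
      setIntegral_union (Ioc_disjoint_Ioi le_rfl) measurableSet_Ioi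
        (hgint.mono_set (fun x hx => hx.1.le))
        (hgint.mono_set (fun x hx => ((neg_pos.2 hs).trans (mem_Ioi.1 hx)).le))]
    have hc1 : EqOn g (fun x => exp (0 + -1 * x)) (Ioc 0 (-s)) := by
      intro x hx
      simp only [hg]
      by_cases h : (0:ℝ) ≤ x + s
      · have hxs : x + s = 0 := le_antisymm (by linarith [hx.2]) h
        rw [if_pos h, hxs, neg_zero, exp_zero, mul_one]; congr 1; ring
      · rw [if_neg h, mul_one]; congr 1; ring
    have hc2 : EqOn g (fun x => exp (-s - 2 * x)) (Ioi (-s)) := by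
      intro x hx
      simp only [hg, if_pos (by linarith [mem_Ioi.1 hx] : (0:ℝ) ≤ x + s)]
      rw [← exp_add]; congr 1; ring
    rw [setIntegral_congr_fun measurableSet_Ioc hc1,
      setIntegral_congr_fun measurableSet_Ioi hc2,
      int_exp_Ioc 0 (-s) 0 (-1) (by linarith) (by norm_num),
      int_exp_Ioi (-s) (-s) two_pos]
    rw [show -s - 2 * (-s) = s by ring, show (0:ℝ) + -1 * (-s) = s by ring,
      show (0:ℝ) + -1 * 0 = -0 by ring, neg_zero, exp_zero]
    simp only [Tre, if_neg (not_le.2 hs)]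
    ring

end Tail

end DiffMinAux

open DiffMinAux

/-- If `X`, `Y`, `Z` are independent `Exp(1)` random variables and `δ ∈ ℝ`, then
`D = min{δ+Y, X+Z} − min{X, δ+Y+Z}` has probability density `d ↦ K(δ,d)`. -/
theorem density_of_diff_min {Ω : Type*} [MeasurableSpace Ω] (μ : Measure Ω)
    [IsProbabilityMeasure μ] (X Y Z : Ω → ℝ)
    (hX : Measurable X) (hY : Measurable Y) (hZ : Measurable Z)
    (hindep : iIndepFun ![X, Y, Z] μ)
    (hXe : Measure.map X μ = expMeasure 1)
    (hYe : Measure.map Y μ = expMeasure 1)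
    (hZe : Measure.map Z μ = expMeasure 1) (δ : ℝ) :
    Measure.map (fun ω => min (δ + Y ω) (X ω + Z ω) - min (X ω) (δ + Y ω + Z ω)) μ =
      volume.withDensity fun d => ENNReal.ofReal (Kden δ d) := by
  classical
  set D : Ω → ℝ := fun ω => min (δ + Y ω) (X ω + Z ω) - min (X ω) (δ + Y ω + Z ω) with hDdef
  set W : Ω → ℝ := fun ω => δ + Y ω - X ω with hWdef
  have hWm : Measurable W := (measurable_const.add hY).sub hX
  have hDm : Measurable D :=
    ((measurable_const.add hY).min (hX.add hZ)).sub (hX.min ((measurable_const.add hY).add hZ))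
  have hvec : ∀ i, Measurable (![X, Y, Z] i) := by
    intro i; fin_cases i <;> simpa using ‹_›
  have hXY : IndepFun X Y μ := by
    have h := hindep.indepFun (show (0 : Fin 3) ≠ 1 by decide)
    exact h
  have hpairZ : IndepFun (fun ω => (X ω, Y ω)) Z μ := by
    have h := hindep.indepFun_prodMk hvec 0 1 2 (by decide) (by decide)
    exact h
  have hWZ : IndepFun W Z μ := by
    have h := hpairZ.comp (φ := fun p : ℝ × ℝ => δ + p.2 - p.1) (ψ := id)
      ((measurable_const.add measurable_snd).sub measurable_fst) measurable_id
    exact h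
  have hexpprob : IsProbabilityMeasure (expMeasure 1) := exp_prob
  have hZ0 : ∀ᵐ ω ∂μ, 0 ≤ Z ω := by
    have hset : {ω | ¬ 0 ≤ Z ω} = Z ⁻¹' Iio 0 := by ext ω; simp [not_le]
    rw [ae_iff, hset, ← Measure.map_apply hZ measurableSet_Iio, hZe, exp_Iio]
    norm_num
  have hWtail : ∀ t : ℝ, μ (W ⁻¹' Ici t) = ENNReal.ofReal (Tre (t - δ)) := by
    intro t
    have hset : W ⁻¹' Ici t = {ω | (t - δ) ≤ Y ω - X ω} := by
      ext ω
      simp only [mem_preimage, mem_Ici, hWdef, mem_setOf_eq]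
      constructor <;> intro h <;> linarith
    rw [hset]
    exact tail_sub μ hX hY hXY hXe hYe (t - δ)
  have hZmap : ∀ S : Set ℝ, MeasurableSet S → μ (Z ⁻¹' S) = expMeasure 1 S := fun S hS => by
    rw [← hZe, Measure.map_apply hZ hS]
  have hrep : ∀ ω, D ω = min (W ω) (Z ω) - min 0 (W ω + Z ω) := fun ω =>
    rep δ (X ω) (Y ω) (Z ω)
  have hprobD : IsProbabilityMeasure (Measure.map D μ) :=
    Measure.isProbabilityMeasure_map hDm.aemeasurable
  refine Measure.ext_of_Ici (Measure.map D μ) _ (fun t => ?_)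
  rw [Measure.map_apply hDm measurableSet_Ici,
    withDensity_apply _ measurableSet_Ici,
    ← ofReal_integral_eq_lintegral_ofReal (Kden_integrable δ).integrableOn
      (ae_of_all _ fun d => Kden_nonneg δ d),
    integral_Kden_Ici δ t]
  rcases lt_or_ge 0 t with ht | ht
  · simp only [Sre, if_pos ht]
    have hsets : D ⁻¹' Ici t =ᵐ[μ] (((W ⁻¹' Ici t) ∩ (Z ⁻¹' Ici t) : Set Ω)) := by
      rw [Filter.eventuallyEq_set]
      filter_upwards [hZ0] with ω hz
      simp only [mem_preimage, mem_Ici, mem_inter_iff]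
      rw [hrep ω]
      exact aux_pos hz ht
    rw [measure_congr hsets,
      hWZ.measure_inter_preimage_eq_mul _ _ measurableSet_Ici measurableSet_Ici,
      hWtail t, hZmap _ measurableSet_Ici, exp_Ici, if_pos ht.le,
      ← ENNReal.ofReal_mul (Tre_nonneg _)]
  · simp only [Sre, if_neg (not_lt.2 ht)]
    have hcompl : (((D ⁻¹' Ici t)ᶜ : Set Ω)) =ᵐ[μ] (((W ⁻¹' Iio t) ∩ (Z ⁻¹' Ioi (-t)) : Set Ω)) := by
      rw [Filter.eventuallyEq_set]
      filter_upwards [hZ0] with ω hz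
      simp only [mem_compl_iff, mem_preimage, mem_Ici, mem_inter_iff, mem_Iio, mem_Ioi, not_le]
      rw [hrep ω]
      exact aux_neg hz ht
    have h1 : μ (D ⁻¹' Ici t) = 1 - μ ((D ⁻¹' Ici t)ᶜ) := by
      have h := prob_compl_eq_one_sub (μ := μ) (s := (D ⁻¹' Ici t)ᶜ) ((hDm measurableSet_Ici).compl)
      rwa [compl_compl] at h
    have h2 : μ (W ⁻¹' Iio t) = ENNReal.ofReal (1 - Tre (t - δ)) := by
      have hc : W ⁻¹' Iio t = (W ⁻¹' Ici t)ᶜ := by rw [← preimage_compl, compl_Ici]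
      rw [hc, prob_compl_eq_one_sub (hWm measurableSet_Ici), hWtail t,
        ENNReal.ofReal_sub _ (Tre_nonneg _), ENNReal.ofReal_one]
    rw [h1, measure_congr hcompl,
      hWZ.measure_inter_preimage_eq_mul _ _ measurableSet_Iio measurableSet_Ioi,
      h2, hZmap _ measurableSet_Ioi, exp_Ioi, if_pos (neg_nonneg.2 ht), neg_neg,
      ← ENNReal.ofReal_mul (sub_nonneg.2 (Tre_le_one _)),
      ENNReal.ofReal_sub _ (mul_nonneg (sub_nonneg.2 (Tre_le_one _)) (exp_pos t).le),
      ENNReal.ofReal_one]
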